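/- Suppose K*D^π*Z^D*H = K*D^D*Z^π*H, let k be a natural number with A^(k+1)*A^D = A^k (so k is at least the index of A), and suppose Y*A^π*S = 0. Then S has a Drazin inverse, given by S^D = −Σ_{i=0}^{k−1} A^i*A^π*Y*T^{i+2}*(1 − T*Y*A^π) + T − T^2*Y*A^π. -/

import Mathlib

open Matrix Finset

/-- `X` is a Drazin inverse of the square matrix `M`: `X*M*X = X`, `M*X = X*M`,
and `M^(l+1)*X = M^l` for some natural number `l`. -/
def IsDrazinInverse {n : Type*} [Fintype n] [DecidableEq n]
    (M X : Matrix n n ℂ) : Prop :=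
  X * M * X = X ∧ M * X = X * M ∧ ∃ l : ℕ, M ^ (l + 1) * X = M ^ l

set_option maxHeartbeats 1600000 in
theorem stmt14
    {p q : Type*} [Fintype p] [DecidableEq p] [Fintype q] [DecidableEq q]
    (A AD : Matrix p p ℂ) (D DD : Matrix q q ℂ)
    (B : Matrix q p ℂ) (C : Matrix p q ℂ)
    (hA : IsDrazinInverse A AD) (hD : IsDrazinInverse D DD)
    (Y S Aπ : Matrix p p ℂ)
    (hY : Y = C * DD * B) (hS : S = A - Y)
    (hAπ : Aπ = 1 - A * AD)
    (Z ZD : Matrix q q ℂ) (hZdef : Z = D - B * AD * C)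
    (hZ : IsDrazinInverse Z ZD)
    (K : Matrix p q ℂ) (H : Matrix q p ℂ)
    (hK : K = AD * C) (hH : H = B * AD)
    (Dπ Zπ : Matrix q q ℂ) (hDπ : Dπ = 1 - D * DD) (hZπ : Zπ = 1 - Z * ZD)
    (T : Matrix p p ℂ) (hT : T = AD + K * ZD * H)
    (hcond1 : K * Dπ * ZD * H = K * DD * Zπ * H)
    (k : ℕ) (hk : A ^ (k + 1) * AD = A ^ k)
    (hcond2 : Y * Aπ * S = 0) :
    IsDrazinInverse S
      (-(∑ i ∈ Finset.range k,
          A ^ i * Aπ * Y * T ^ (i + 2) * (1 - T * Y * Aπ))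
        + T - T ^ 2 * Y * Aπ) := by
  obtain ⟨hA1, hA2, -⟩ := hA
  obtain ⟨-, hD2, -⟩ := hD
  -- ### basic facts about A, AD, Aπ
  have heAD : A * AD * AD = AD := by rw [hA2]; exact hA1
  have hADe : AD * (A * AD) = AD := by rw [← mul_assoc]; exact hA1
  have hee : A * AD * (A * AD) = A * AD := by rw [mul_assoc A AD, hADe]
  have hone : A * AD + Aπ = 1 := by rw [hAπ]; abel
  have heq : (1 : Matrix p p ℂ) - Aπ = A * AD := by rw [hAπ, sub_sub_cancel]
  have hπe : Aπ * (A * AD) = 0 := by rw [hAπ, sub_mul, one_mul, hee, sub_self]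
  have heπ : A * AD * Aπ = 0 := by rw [hAπ, mul_sub, mul_one, hee, sub_self]
  have hππ : Aπ * Aπ = Aπ := by nth_rewrite 2 [hAπ]; rw [mul_sub, mul_one, hπe, sub_zero]
  have hAe : A * (A * AD) = A * AD * A := by rw [hA2, ← mul_assoc, hA2]
  have hπA : Aπ * A = A * Aπ := by rw [hAπ, sub_mul, one_mul, mul_sub, mul_one, hAe]
  have cπA : Commute Aπ A := hπA
  have cAe : Commute (A * AD) A := hAe.symm
  have hπAi : ∀ i : ℕ, Aπ * A ^ i = A ^ i * Aπ := fun i => (cπA.pow_right i).eq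
  have heAi : ∀ i : ℕ, A * AD * A ^ i = A ^ i * (A * AD) := fun i => (cAe.pow_right i).eq
  have hπAD : Aπ * AD = 0 := by rw [hAπ, sub_mul, one_mul, heAD, sub_self]
  have hADπ : AD * Aπ = 0 := by rw [hAπ, mul_sub, mul_one, hADe, sub_self]
  have hπT : Aπ * T = 0 := by
    rw [hT, hK, mul_add]
    simp only [Matrix.mul_assoc]
    rw [← Matrix.mul_assoc Aπ AD, hπAD]
    simp
  have hTπ : T * Aπ = 0 := by
    rw [hT, hH, add_mul]
    simp only [Matrix.mul_assoc]
    rw [hADπ]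
    simp
  have heT : A * AD * T = T := by rw [← heq, sub_mul, one_mul, hπT, sub_zero]
  have hTe : T * (A * AD) = T := by rw [← heq, mul_sub, mul_one, hTπ, sub_zero]
  have hk' : A ^ k * Aπ = 0 := by
    rw [hAπ, mul_sub, mul_one, ← mul_assoc, ← pow_succ, hk, sub_self]
  have hc2 : Y * Aπ * A = Y * Aπ * Y := by
    have h := hcond2
    rw [hS, mul_sub] at h
    exact sub_eq_zero.mp h
  -- ### consequence of hcond1 : T = AD + AD*Y*T
  have E3 : AD * C * ZD * (B * AD)
      = AD * C * DD * (B * AD) + AD * C * DD * (B * AD * C) * ZD * (B * AD) := by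
    have h := hcond1
    rw [hDπ, hZπ, hZdef, hK, hH] at h
    have hL : AD * C * (1 - D * DD) * ZD * (B * AD)
        = AD * C * ZD * (B * AD) - AD * C * (D * DD) * ZD * (B * AD) := by
      simp only [Matrix.mul_sub, Matrix.sub_mul, Matrix.mul_one, Matrix.mul_assoc]
    have hR : AD * C * DD * (1 - (D - B * AD * C) * ZD) * (B * AD)
        = AD * C * DD * (B * AD) - AD * C * (DD * D) * ZD * (B * AD)
          + AD * C * DD * (B * AD * C) * ZD * (B * AD) := by
      simp only [Matrix.mul_sub, Matrix.sub_mul, Matrix.mul_one, Matrix.mul_assoc]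
      abel
    rw [hL, hR, hD2] at h
    calc AD * C * ZD * (B * AD)
        = AD * C * ZD * (B * AD) - AD * C * (DD * D) * ZD * (B * AD)
            + AD * C * (DD * D) * ZD * (B * AD) := by abel
      _ = (AD * C * DD * (B * AD) - AD * C * (DD * D) * ZD * (B * AD)
            + AD * C * DD * (B * AD * C) * ZD * (B * AD))
            + AD * C * (DD * D) * ZD * (B * AD) := by rw [h]
      _ = AD * C * DD * (B * AD) + AD * C * DD * (B * AD * C) * ZD * (B * AD) := by abel
  have hT1 : T = AD + AD * Y * T := by
    have h5 : AD * (C * DD * B) * (AD + AD * C * ZD * (B * AD))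
        = AD * C * DD * (B * AD) + AD * C * DD * (B * AD * C) * ZD * (B * AD) := by
      simp only [Matrix.mul_add, Matrix.mul_assoc]
    rw [hT, hY, hK, hH, h5, E3]
  -- ### core identities
  have hST : S * T = A * AD - Aπ * Y * T := by
    rw [hS, sub_mul]
    nth_rewrite 1 [hT1]
    rw [hAπ]
    noncomm_ring
  have hPQ : (A * AD * S * (A * AD) + Aπ) * (T + Aπ) = 1 := by
    have e1 : (A * AD * S * (A * AD) + Aπ) * (T + Aπ)
        = A * AD * (S * (A * AD * T)) + A * AD * S * (A * AD * Aπ) + (Aπ * T + Aπ * Aπ) := by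
      noncomm_ring
    rw [e1, heT, heπ, hπT, hππ, mul_zero, add_zero, zero_add]
    rw [hST, mul_sub, hee]
    rw [show A * AD * (Aπ * Y * T) = A * AD * Aπ * (Y * T) by noncomm_ring, heπ, zero_mul,
      sub_zero, hone]
  have hQP : (T + Aπ) * (A * AD * S * (A * AD) + Aπ) = 1 := mul_eq_one_comm.mp hPQ
  have hTSe : T * (S * (A * AD)) = A * AD := by
    have e2 : (T + Aπ) * (A * AD * S * (A * AD) + Aπ)
        = T * (A * AD) * (S * (A * AD)) + T * Aπ + (Aπ * (A * AD) * (S * (A * AD)) + Aπ * Aπ) := by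
      noncomm_ring
    rw [e2, hTe, hTπ, hπe, hππ, add_zero, zero_mul, zero_add] at hQP
    have h6 := eq_sub_of_add_eq hQP
    rw [heq] at h6
    exact h6
  have hTS : T * S = A * AD - T * (Y * Aπ) := by
    calc T * S = T * (S * (A * AD + Aπ)) := by rw [hone, mul_one]
      _ = T * (S * (A * AD)) + T * (S * Aπ) := by rw [mul_add, mul_add]
      _ = A * AD + T * (S * Aπ) := by rw [hTSe]
      _ = A * AD - T * (Y * Aπ) := by
          rw [hS, sub_mul, ← hπA, mul_sub]
          rw [show T * (Aπ * A) = T * Aπ * A from (mul_assoc T Aπ A).symm, hTπ, zero_mul]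
          abel
  -- ### the Y-killing lemmas
  have hswap : ∀ i : ℕ, Y * (Aπ * Y) ^ i = (Y * Aπ) ^ i * Y := by
    intro i
    induction i with
    | zero => simp
    | succ n ih =>
      rw [pow_succ, ← mul_assoc, ih, pow_succ]
      simp only [mul_assoc]
  have hEAπ : A * AD * (A * Aπ) = 0 := by
    rw [← mul_assoc, ← hAe, mul_assoc, heπ, mul_zero]
  have hπAie : ∀ i : ℕ, Aπ * A ^ i * (A * AD) = 0 := fun i => by
    rw [hπAi, mul_assoc, hπe, mul_zero]
  have lem1 : ∀ i : ℕ, Y * Aπ * A ^ i * Aπ = Y * (Aπ * Y) ^ i * Aπ := by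
    intro i
    induction i with
    | zero => simp [mul_assoc, hππ]
    | succ n ih =>
      have s1 : Y * Aπ * A ^ (n+1) * Aπ
          = Y * Aπ * A ^ n * (A * AD * (A * Aπ)) + Y * Aπ * A ^ n * Aπ * (A * Aπ) := by
        rw [pow_succ]
        calc Y * Aπ * (A ^ n * A) * Aπ
            = Y * Aπ * A ^ n * ((A * AD + Aπ) * (A * Aπ)) := by
              rw [hone, one_mul]; simp only [mul_assoc]
          _ = _ := by rw [add_mul, mul_add]; simp only [mul_assoc]
      rw [s1, hEAπ, mul_zero, zero_add, ih]
      calc Y * (Aπ * Y) ^ n * Aπ * (A * Aπ)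
          = (Y * Aπ) ^ n * Y * Aπ * (A * Aπ) := by rw [hswap n]
        _ = (Y * Aπ) ^ n * (Y * Aπ * A * Aπ) := by simp only [mul_assoc]
        _ = (Y * Aπ) ^ n * (Y * Aπ * Y * Aπ) := by rw [hc2]
        _ = (Y * Aπ) ^ (n+1) * Y * Aπ := by rw [pow_succ]; simp only [mul_assoc]
        _ = Y * (Aπ * Y) ^ (n+1) * Aπ := by rw [hswap (n+1)]
  have lem2 : ∀ i : ℕ, Y * (Aπ * Y) ^ i * Aπ * (Y * (A * AD)) = 0 := by
    intro i
    calc Y * (Aπ * Y) ^ i * Aπ * (Y * (A * AD))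
        = (Y * Aπ) ^ i * (Y * Aπ * Y * (A * AD)) := by rw [hswap i]; simp only [mul_assoc]
      _ = (Y * Aπ) ^ i * (Y * Aπ * A * (A * AD)) := by rw [hc2]
      _ = (Y * Aπ) ^ i * (Y * (Aπ * A * (A * AD))) := by simp only [mul_assoc]
      _ = 0 := by
          rw [hπA, mul_assoc A Aπ, hπe, mul_zero, mul_zero, mul_zero]
  have lemE4 : ∀ i : ℕ, Y * Aπ * A ^ i * (Y * (A * AD)) = 0 := by
    intro i
    have split : Y * Aπ * A ^ i = Y * Aπ * A ^ i * Aπ := by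
      calc Y * Aπ * A ^ i = Y * Aπ * A ^ i * (A * AD + Aπ) := by rw [hone, mul_one]
        _ = Y * (Aπ * A ^ i * (A * AD)) + Y * Aπ * A ^ i * Aπ := by
            rw [mul_add]; simp only [mul_assoc]
        _ = Y * Aπ * A ^ i * Aπ := by rw [hπAie, mul_zero, zero_add]
    calc Y * Aπ * A ^ i * (Y * (A * AD))
        = Y * Aπ * A ^ i * Aπ * (Y * (A * AD)) := by rw [← split]
      _ = Y * (Aπ * Y) ^ i * Aπ * (Y * (A * AD)) := by rw [lem1]
      _ = 0 := lem2 i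
  have hepow : ∀ m : ℕ, A * AD * T ^ (m+1) = T ^ (m+1) := fun m => by
    rw [pow_succ', ← mul_assoc, heT]
  have hpowe : ∀ m : ℕ, T ^ (m+1) * (A * AD) = T ^ (m+1) := fun m => by
    rw [pow_succ, mul_assoc, hTe]
  have hYt : ∀ i m : ℕ, Y * (A ^ i * Aπ * Y * T ^ (m+1)) = 0 := by
    intro i m
    calc Y * (A ^ i * Aπ * Y * T ^ (m+1))
        = Y * (A ^ i * Aπ * Y * (A * AD * T ^ (m+1))) := by rw [hepow]
      _ = Y * Aπ * A ^ i * (Y * (A * AD)) * T ^ (m+1) := by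
          rw [← hπAi]; simp only [mul_assoc]
      _ = 0 := by rw [lemE4, zero_mul]
  -- ### the sums F, G, H0
  set F : Matrix p p ℂ := ∑ i ∈ Finset.range k, A ^ i * Aπ * Y * T ^ (i+2) with hFdef
  set G : Matrix p p ℂ := ∑ i ∈ Finset.range k, A ^ i * Aπ * Y * T ^ (i+1) with hGdef
  set H0 : Matrix p p ℂ := ∑ i ∈ Finset.range k, A ^ i * Aπ * Y * T ^ i with hH0def
  have hTt : ∀ i : ℕ, T * (A ^ i * Aπ) = 0 := fun i => by
    rw [← hπAi, ← mul_assoc, hTπ, zero_mul]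
  have het : ∀ i : ℕ, A * AD * (A ^ i * Aπ) = 0 := fun i => by
    rw [← mul_assoc, heAi, mul_assoc, heπ, mul_zero]
  have hπt : ∀ i : ℕ, Aπ * (A ^ i * Aπ) = A ^ i * Aπ := fun i => by
    rw [← mul_assoc, hπAi, mul_assoc, hππ]
  have hTkill : ∀ (M N : Matrix p p ℂ) (i : ℕ), T * (A ^ i * Aπ * M * N) = 0 := fun M N i => by
    calc T * (A ^ i * Aπ * M * N) = T * (A ^ i * Aπ) * M * N := by simp only [mul_assoc]
      _ = 0 := by rw [hTt, zero_mul, zero_mul]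
  have hekill : ∀ (M N : Matrix p p ℂ) (i : ℕ), A * AD * (A ^ i * Aπ * M * N) = 0 :=
    fun M N i => by
    calc A * AD * (A ^ i * Aπ * M * N) = A * AD * (A ^ i * Aπ) * M * N := by
          simp only [mul_assoc]
      _ = 0 := by rw [het, zero_mul, zero_mul]
  have hπkeep : ∀ (M N : Matrix p p ℂ) (i : ℕ),
      Aπ * (A ^ i * Aπ * M * N) = A ^ i * Aπ * M * N := fun M N i => by
    calc Aπ * (A ^ i * Aπ * M * N) = Aπ * (A ^ i * Aπ) * M * N := by simp only [mul_assoc]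
      _ = A ^ i * Aπ * M * N := by rw [hπt]
  have hTF : T * F = 0 := by
    rw [hFdef, Finset.mul_sum]
    exact Finset.sum_eq_zero fun i _ => hTkill Y (T ^ (i+2)) i
  have hTG : T * G = 0 := by
    rw [hGdef, Finset.mul_sum]
    exact Finset.sum_eq_zero fun i _ => hTkill Y (T ^ (i+1)) i
  have heG : A * AD * G = 0 := by
    rw [hGdef, Finset.mul_sum]
    exact Finset.sum_eq_zero fun i _ => hekill Y (T ^ (i+1)) i
  have heH0 : A * AD * H0 = 0 := by
    rw [hH0def, Finset.mul_sum]
    exact Finset.sum_eq_zero fun i _ => hekill Y (T ^ i) i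
  have hπF : Aπ * F = F := by
    rw [hFdef, Finset.mul_sum]
    exact Finset.sum_congr rfl fun i _ => hπkeep Y (T ^ (i+2)) i
  have hπG : Aπ * G = G := by
    rw [hGdef, Finset.mul_sum]
    exact Finset.sum_congr rfl fun i _ => hπkeep Y (T ^ (i+1)) i
  have hYF : Y * F = 0 := by
    rw [hFdef, Finset.mul_sum]
    exact Finset.sum_eq_zero fun i _ => hYt i (i+1)
  have hYG : Y * G = 0 := by
    rw [hGdef, Finset.mul_sum]
    exact Finset.sum_eq_zero fun i _ => hYt i i
  have hFt : ∀ j : ℕ, F * (A ^ j * Aπ) = 0 := fun j => by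
    rw [hFdef, Finset.sum_mul]
    refine Finset.sum_eq_zero fun i _ => ?_
    calc A ^ i * Aπ * Y * T ^ (i+2) * (A ^ j * Aπ)
        = A ^ i * Aπ * Y * (T ^ (i+1) * (T * (A ^ j * Aπ))) := by
          rw [pow_succ]; simp only [mul_assoc]
      _ = 0 := by rw [hTt]; simp
  have hFkill : ∀ (M N : Matrix p p ℂ) (j : ℕ), F * (A ^ j * Aπ * M * N) = 0 := fun M N j => by
    calc F * (A ^ j * Aπ * M * N) = F * (A ^ j * Aπ) * M * N := by simp only [mul_assoc]
      _ = 0 := by rw [hFt, zero_mul, zero_mul]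
  have hFF : F * F = 0 := by
    nth_rewrite 2 [hFdef]
    rw [Finset.mul_sum]
    exact Finset.sum_eq_zero fun i _ => hFkill Y (T ^ (i+2)) i
  have hFG : F * G = 0 := by
    rw [hGdef, Finset.mul_sum]
    exact Finset.sum_eq_zero fun i _ => hFkill Y (T ^ (i+1)) i
  have hFe : F * (A * AD) = F := by
    rw [hFdef, Finset.sum_mul]
    refine Finset.sum_congr rfl fun i _ => ?_
    rw [mul_assoc (A ^ i * Aπ * Y), hpowe (i+1)]
  have hGT : G * T = F := by
    rw [hGdef, hFdef, Finset.sum_mul]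
    refine Finset.sum_congr rfl fun i _ => ?_
    rw [mul_assoc (A ^ i * Aπ * Y), ← pow_succ]
  have hSF : S * F = G - Aπ * Y * T := by
    have h1 : S * F = ∑ i ∈ Finset.range k, A ^ (i+1) * Aπ * Y * T ^ (i+1+1) := by
      rw [hFdef, Finset.mul_sum]
      refine Finset.sum_congr rfl fun i _ => ?_
      rw [hS, sub_mul, hYt i (i+1), sub_zero]
      calc A * (A ^ i * Aπ * Y * T ^ (i+2)) = A * A ^ i * Aπ * Y * T ^ (i+2) := by
            simp only [mul_assoc]
        _ = A ^ (i+1) * Aπ * Y * T ^ (i+1+1) := by rw [← pow_succ']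
    have h2 := Finset.sum_range_succ' (fun j => A ^ j * Aπ * Y * T ^ (j+1)) k
    have h3 := Finset.sum_range_succ (fun j => A ^ j * Aπ * Y * T ^ (j+1)) k
    rw [h3, show A ^ k * Aπ * Y * T ^ (k+1) = 0 by rw [hk', zero_mul, zero_mul], add_zero] at h2
    rw [h1, hGdef, h2, pow_zero, one_mul, zero_add, pow_one]
    abel
  have hSG : S * G = H0 - Aπ * Y := by
    have h1 : S * G = ∑ i ∈ Finset.range k, A ^ (i+1) * Aπ * Y * T ^ (i+1) := by
      rw [hGdef, Finset.mul_sum]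
      refine Finset.sum_congr rfl fun i _ => ?_
      rw [hS, sub_mul, hYt i i, sub_zero]
      calc A * (A ^ i * Aπ * Y * T ^ (i+1)) = A * A ^ i * Aπ * Y * T ^ (i+1) := by
            simp only [mul_assoc]
        _ = A ^ (i+1) * Aπ * Y * T ^ (i+1) := by rw [← pow_succ']
    have h2 := Finset.sum_range_succ' (fun j => A ^ j * Aπ * Y * T ^ j) k
    have h3 := Finset.sum_range_succ (fun j => A ^ j * Aπ * Y * T ^ j) k
    rw [h3, show A ^ k * Aπ * Y * T ^ k = 0 by rw [hk', zero_mul, zero_mul], add_zero] at h2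
    rw [h1, hH0def, h2, pow_zero, one_mul, pow_zero, mul_one]
    abel
  have hFS : F * S = G - F * (Y * Aπ) := by
    have h1 : F * S = ∑ i ∈ Finset.range k,
        (A ^ i * Aπ * Y * T ^ (i+1) - A ^ i * Aπ * Y * T ^ (i+2) * (Y * Aπ)) := by
      rw [hFdef, Finset.sum_mul]
      refine Finset.sum_congr rfl fun i _ => ?_
      have a1 : T ^ (i+2) = T ^ (i+1) * T := pow_succ T (i+1)
      rw [a1]
      calc A ^ i * Aπ * Y * (T ^ (i+1) * T) * S
          = A ^ i * Aπ * Y * (T ^ (i+1) * (T * S)) := by simp only [mul_assoc]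
        _ = A ^ i * Aπ * Y * (T ^ (i+1) * (A * AD))
              - A ^ i * Aπ * Y * (T ^ (i+1) * (T * (Y * Aπ))) := by
            rw [hTS, mul_sub, mul_sub]
        _ = A ^ i * Aπ * Y * T ^ (i+1) - A ^ i * Aπ * Y * (T ^ (i+1) * T) * (Y * Aπ) := by
            rw [hpowe (i : ℕ)]; simp only [mul_assoc]
    rw [h1, Finset.sum_sub_distrib, ← hGdef, ← Finset.sum_mul, ← hFdef]
  -- ### assemble W and X
  set W : Matrix p p ℂ := T - F with hWdef
  set X : Matrix p p ℂ := W - W * T * Y * Aπ with hXdef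
  have hX0 : -(∑ i ∈ Finset.range k,
      A ^ i * Aπ * Y * T ^ (i + 2) * (1 - T * Y * Aπ)) + T - T ^ 2 * Y * Aπ = X := by
    have h1 : ∀ i : ℕ, A ^ i * Aπ * Y * T ^ (i+2) * (1 - T * Y * Aπ)
        = A ^ i * Aπ * Y * T ^ (i+2) - A ^ i * Aπ * Y * T ^ (i+2) * (T * Y * Aπ) := by
      intro i
      rw [mul_one_sub]
    rw [Finset.sum_congr rfl fun i _ => h1 i, Finset.sum_sub_distrib, ← hFdef, ← Finset.sum_mul,
      ← hFdef, hXdef, hWdef]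
    have h2 : T ^ 2 = T * T := sq T
    rw [h2]
    noncomm_ring
  rw [hX0]
  -- ### the three axioms
  have hSW : S * W = A * AD - G := by
    rw [hWdef, mul_sub, hST, hSF]
    abel
  have hWS : W * S = A * AD - G - W * (Y * Aπ) := by
    rw [hWdef, sub_mul, hTS, hFS, sub_mul]
    abel
  have hXS : X * S = A * AD - G - W * (Y * Aπ) := by
    rw [hXdef, sub_mul, hWS]
    rw [show W * T * Y * Aπ * S = W * T * (Y * Aπ * S) from by simp only [mul_assoc],
      hcond2, mul_zero, sub_zero]
  have hSX : S * X = A * AD - G - W * (Y * Aπ) := by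
    have h1 : S * X = S * W - S * W * (T * Y * Aπ) := by
      rw [hXdef, mul_sub]; simp only [mul_assoc]
    rw [h1, hSW, sub_mul, sub_mul]
    rw [show A * AD * (T * Y * Aπ) = A * AD * T * (Y * Aπ) from by simp only [mul_assoc], heT]
    rw [show G * (T * Y * Aπ) = G * T * (Y * Aπ) from by simp only [mul_assoc], hGT]
  have ax2 : S * X = X * S := by rw [hSX, hXS]
  -- axiom 1
  have hπW : Aπ * W = -F := by rw [hWdef, mul_sub, hπT, hπF, zero_sub]
  have hWe : W * (A * AD) = W := by rw [hWdef, sub_mul, hTe, hFe]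
  have hWW : W * W = W * T := by
    rw [hWdef, sub_mul, mul_sub, mul_sub, hTF, hFF, sub_mul]
    abel
  have hWG : W * G = 0 := by rw [hWdef, sub_mul, hTG, hFG, sub_zero]
  have e1 : X * (A * AD) = W := by
    rw [hXdef, sub_mul, hWe]
    rw [show W * T * Y * Aπ * (A * AD) = W * T * Y * (Aπ * (A * AD)) from by
      simp only [mul_assoc], hπe, mul_zero, sub_zero]
  have e2 : X * G = 0 := by
    rw [hXdef, sub_mul, hWG]
    rw [show W * T * Y * Aπ * G = W * T * Y * (Aπ * G) from by simp only [mul_assoc], hπG]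
    rw [show W * T * Y * G = W * T * (Y * G) from by simp only [mul_assoc], hYG, mul_zero]
    simp
  have e3 : X * (W * (Y * Aπ)) = W * T * Y * Aπ := by
    rw [hXdef, sub_mul]
    have f1 : W * (W * (Y * Aπ)) = W * T * (Y * Aπ) := by
      rw [← mul_assoc, hWW]
    have f2 : W * T * Y * Aπ * (W * (Y * Aπ)) = 0 := by
      calc W * T * Y * Aπ * (W * (Y * Aπ))
          = W * T * (Y * (Aπ * W * (Y * Aπ))) := by simp only [mul_assoc]
        _ = 0 := by
            rw [hπW, neg_mul, mul_neg, show Y * (F * (Y * Aπ)) = Y * F * (Y * Aπ) from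
              (mul_assoc Y F (Y * Aπ)).symm, hYF, zero_mul, neg_zero, mul_zero]
    rw [f1, f2, sub_zero]
    simp only [mul_assoc]
  have ax1 : X * S * X = X := by
    have h1 : X * S * X = X * (S * X) := mul_assoc X S X
    rw [h1, hSX, mul_sub, mul_sub, e1, e2, e3, sub_zero, hXdef]
  -- axiom 3
  set Q : Matrix p p ℂ := 1 - S * X with hQdef
  have hQexp : Q = Aπ + G + W * (Y * Aπ) := by
    rw [hQdef, hSX, hAπ]
    abel
  have hSXSX : S * X * (S * X) = S * X := by
    calc S * X * (S * X) = S * (X * S * X) := by simp only [mul_assoc]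
      _ = S * X := by rw [ax1]
  have hQQ : Q * Q = Q := by
    have h7 : (1 - S * X) * (1 - S * X) = 1 - S * X - S * X + S * X * (S * X) := by
      noncomm_ring
    rw [hQdef, h7, hSXSX]
    abel
  have hSQ : S * Q = Q * S := by
    rw [hQdef, mul_sub, sub_mul, mul_one, one_mul]
    have h8 : S * (S * X) = S * X * S := by
      rw [mul_assoc, ← ax2]
    rw [h8]
  have hSQexp : S * Q = A * Aπ + H0 - Aπ * Y - Aπ * (Y * Aπ) - G * (Y * Aπ) := by
    rw [hQexp, mul_add, mul_add, hSG]
    rw [show S * (W * (Y * Aπ)) = S * W * (Y * Aπ) from (mul_assoc S W (Y * Aπ)).symm, hSW]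
    rw [sub_mul]
    rw [show S * Aπ = A * Aπ - Y * Aπ from by rw [hS, sub_mul]]
    rw [show A * AD * (Y * Aπ) = Y * Aπ - Aπ * (Y * Aπ) from by
      rw [← heq, sub_mul, one_mul]]
    abel
  have heSQ : A * AD * (S * Q) = 0 := by
    rw [hSQexp, mul_sub, mul_sub, mul_sub, mul_add]
    rw [hEAπ, heH0]
    rw [show A * AD * (Aπ * Y) = A * AD * Aπ * Y from (mul_assoc (A*AD) Aπ Y).symm, heπ,
      zero_mul]
    rw [show A * AD * (Aπ * (Y * Aπ)) = A * AD * Aπ * (Y * Aπ) from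
      (mul_assoc (A*AD) Aπ (Y*Aπ)).symm, heπ, zero_mul]
    rw [show A * AD * (G * (Y * Aπ)) = A * AD * G * (Y * Aπ) from
      (mul_assoc (A*AD) G (Y*Aπ)).symm, heG, zero_mul]
    simp
  have hSQA : S * Q = Aπ * (S * Q) := by
    have h1 : (A * AD + Aπ) * (S * Q) = S * Q := by rw [hone, one_mul]
    rw [add_mul, heSQ, zero_add] at h1
    exact h1.symm
  have hSAπS : S * (Aπ * S) = A * (Aπ * S) := by
    nth_rewrite 1 [hS]
    rw [sub_mul, ← mul_assoc Y Aπ S, hcond2, sub_zero]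
  have hAπSpow : ∀ m : ℕ, (Aπ * S) ^ (m+1) = A ^ m * Aπ * S := by
    intro m
    induction m with
    | zero => rw [pow_one, pow_zero, one_mul]
    | succ n ih =>
      rw [pow_succ, ih]
      calc A ^ n * Aπ * S * (Aπ * S) = A ^ n * (Aπ * (S * (Aπ * S))) := by
            simp only [mul_assoc]
        _ = A ^ n * (Aπ * (A * (Aπ * S))) := by rw [hSAπS]
        _ = A ^ n * (Aπ * A * (Aπ * S)) := by simp only [mul_assoc]
        _ = A ^ n * (A * (Aπ * (Aπ * S))) := by rw [hπA]; simp only [mul_assoc]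
        _ = A ^ n * (A * (Aπ * S)) := by rw [← mul_assoc Aπ Aπ S, hππ]
        _ = A ^ (n+1) * Aπ * S := by rw [← mul_assoc, ← mul_assoc, ← pow_succ]
  have hSQpow : ∀ m : ℕ, (S * Q) ^ (m+1) = (Aπ * S) ^ (m+1) * Q := by
    intro m
    induction m with
    | zero => rw [pow_one, pow_one, hSQA, mul_assoc]
    | succ n ih =>
      rw [pow_succ, ih]
      have h1 : Q * (S * Q) = Aπ * (S * Q) := by
        calc Q * (S * Q) = Q * S * Q := by rw [mul_assoc]
          _ = S * Q * Q := by rw [hSQ]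
          _ = S * (Q * Q) := by rw [mul_assoc]
          _ = S * Q := by rw [hQQ]
          _ = Aπ * (S * Q) := hSQA
      calc (Aπ * S) ^ (n+1) * Q * (S * Q) = (Aπ * S) ^ (n+1) * (Q * (S * Q)) := by
            rw [mul_assoc]
        _ = (Aπ * S) ^ (n+1) * (Aπ * (S * Q)) := by rw [h1]
        _ = (Aπ * S) ^ (n+1) * (Aπ * S) * Q := by simp only [mul_assoc]
        _ = (Aπ * S) ^ (n+1+1) * Q := by rw [← pow_succ]
  have hQpow : ∀ n : ℕ, Q ^ (n+1) = Q := by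
    intro n
    induction n with
    | zero => rw [pow_one]
    | succ m ih => rw [pow_succ, ih, hQQ]
  have hcommSQ : Commute S Q := hSQ
  have h2 : S ^ (k+1) * Q = 0 := by
    calc S ^ (k+1) * Q = S ^ (k+1) * Q ^ (k+1) := by rw [hQpow k]
      _ = (S * Q) ^ (k+1) := (hcommSQ.mul_pow (k+1)).symm
      _ = (Aπ * S) ^ (k+1) * Q := hSQpow k
      _ = A ^ k * Aπ * S * Q := by rw [hAπSpow k]
      _ = 0 := by rw [hk', zero_mul, zero_mul]
  have h3 : S * X = 1 - Q := by rw [hQdef, sub_sub_cancel]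
  have ax3 : S ^ (k+1+1) * X = S ^ (k+1) := by
    calc S ^ (k+1+1) * X = S ^ (k+1) * (S * X) := by rw [pow_succ, mul_assoc]
      _ = S ^ (k+1) * (1 - Q) := by rw [h3]
      _ = S ^ (k+1) := by rw [mul_sub, mul_one, h2, sub_zero]
  exact ⟨ax1, ax2, k+1, ax3⟩
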